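/- For any distributions μ, ν over the states of an input-enabled probabilistic automaton, μ ∼ ν (distribution-based bisimilar) if and only if D_b(μ,ν) = 0. -/

import Mathlib

open Finset

structure ProbDist (S : Type) [Fintype S] where
  f : S → ℝ
  nonneg : ∀ s, 0 ≤ f s
  sum_one : ∑ s, f s = 1

/-- Probability assigned by a distribution to a set of states. -/
noncomputable def ProbDist.pr {S : Type} [Fintype S] (μ : ProbDist S) (C : Set S) : ℝ :=
  ∑ s, C.indicator μ.f s

/-- μ(A) := Σ_{s : L s = A} μ(s). -/
noncomputable def pOf {S AP : Type} [Fintype S] (L : S → Finset AP) (μ : ProbDist S)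
    (A : Finset AP) : ℝ :=
  μ.pr {s | L s = A}

/-- d_AP(μ,ν) := (1/2) Σ_{A ⊆ AP} |μ(A) − ν(A)|. -/
noncomputable def dAP {S AP : Type} [Fintype S] [Fintype AP] [DecidableEq AP]
    (L : S → Finset AP) (μ ν : ProbDist S) : ℝ :=
  (1 / 2) * ∑ A : Finset AP, |pOf L μ A - pOf L ν A|

/-- A (Segala) probabilistic automaton, image-finite. -/
structure PA (S Act AP : Type) [Fintype S] where
  trans : S → Act → ProbDist S → Prop
  L : S → Finset AP
  imageFinite : ∀ s a, {μ | trans s a μ}.Finite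

def PA.InputEnabled {S Act AP : Type} [Fintype S] (M : PA S Act AP) : Prop :=
  ∀ s a, ∃ μ, M.trans s a μ

noncomputable def PA.probOf {S Act AP : Type} [Fintype S] (M : PA S Act AP)
    (μ : ProbDist S) (A : Finset AP) : ℝ := pOf M.L μ A

/-- Combined transition s --a-->_P μ : μ is a convex combination of one-step successors. -/
def Combined {S Act AP : Type} [Fintype S] (M : PA S Act AP) (s : S) (a : Act)
    (μ : ProbDist S) : Prop :=
  ∃ (n : ℕ) (p : Fin n → ℝ) (ν : Fin n → ProbDist S),
    (∀ i, 0 ≤ p i) ∧ (∑ i, p i = 1) ∧ (∀ i, M.trans s a (ν i)) ∧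
    (∀ t, μ.f t = ∑ i, p i * (ν i).f t)

/-- Lifted transition μ --a--> μ' between distributions. -/
def Lifted {S Act AP : Type} [Fintype S] (M : PA S Act AP) (μ : ProbDist S) (a : Act)
    (μ' : ProbDist S) : Prop :=
  ∃ k : S → ProbDist S, (∀ s, 0 < μ.f s → Combined M s a (k s)) ∧
    (∀ t, μ'.f t = ∑ s, μ.f s * (k s).f t)

/-- ProbDist S carries the topology inherited from ℝ^{|S|}. -/
noncomputable instance {S : Type} [Fintype S] : TopologicalSpace (ProbDist S) :=
  TopologicalSpace.induced (fun μ : ProbDist S => μ.f) inferInstance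

/-- Distribution-based bisimulation. -/
def IsBisim {S Act AP : Type} [Fintype S] (M : PA S Act AP)
    (R : ProbDist S → ProbDist S → Prop) : Prop :=
  Symmetric R ∧ ∀ μ ν, R μ ν →
    (∀ A : Finset AP, M.probOf μ A = M.probOf ν A) ∧
    (∀ a μ', Lifted M μ a μ' → ∃ ν', Lifted M ν a ν' ∧ R μ' ν')

/-- Distribution-based bisimilarity. -/
def Bisimilar {S Act AP : Type} [Fintype S] (M : PA S Act AP) (μ ν : ProbDist S) : Prop :=
  ∃ R, IsBisim M R ∧ R μ ν

/-- A (discounted) approximate bisimulation: a family of symmetric relations. -/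
def IsApproxBisim {S Act AP : Type} [Fintype S] [Fintype AP] [DecidableEq AP]
    (M : PA S Act AP) (γ : ℝ) (R : ℝ → ProbDist S → ProbDist S → Prop) : Prop :=
  (∀ ε, Symmetric (R ε)) ∧ ∀ ε μ ν, R ε μ ν →
    dAP M.L μ ν ≤ ε ∧
    ∀ a μ', Lifted M μ a μ' → ∃ ν', Lifted M ν a ν' ∧ R (ε / γ) μ' ν'

/-- μ ∼_ε ν. -/
def ApproxBisimilar {S Act AP : Type} [Fintype S] [Fintype AP] [DecidableEq AP]
    (M : PA S Act AP) (γ : ℝ) (ε : ℝ) (μ ν : ProbDist S) : Prop :=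
  ∃ R, IsApproxBisim M γ R ∧ R ε μ ν

/-- The bisimulation distance D_b(μ,ν) = inf {ε ≥ 0 : μ ∼_ε ν}. -/
noncomputable def Db {S Act AP : Type} [Fintype S] [Fintype AP] [DecidableEq AP]
    (M : PA S Act AP) (γ : ℝ) (μ ν : ProbDist S) : ℝ :=
  sInf {ε | 0 ≤ ε ∧ ApproxBisimilar M γ ε μ ν}

namespace StmtAux

set_option linter.unusedSectionVars false

variable {S Act AP : Type} [Fintype S] [Fintype AP] [DecidableEq AP]

theorem pd_ext {μ ν : ProbDist S} (h : μ.f = ν.f) : μ = ν := by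
  cases μ; cases ν; simpa using h

/-- Unhalved L1 distance between distributions. -/
noncomputable def dd (μ ν : ProbDist S) : ℝ := ∑ s, |μ.f s - ν.f s|

theorem dd_nonneg (μ ν : ProbDist S) : 0 ≤ dd μ ν :=
  Finset.sum_nonneg fun _ _ => abs_nonneg _

theorem dd_comm (μ ν : ProbDist S) : dd μ ν = dd ν μ := by
  unfold dd; exact Finset.sum_congr rfl fun s _ => abs_sub_comm _ _

theorem pOf_eq (L : S → Finset AP) (μ : ProbDist S) (A : Finset AP) :
    pOf L μ A = ∑ s ∈ Finset.univ.filter (fun s => L s = A), μ.f s := by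
  unfold pOf ProbDist.pr
  rw [Finset.sum_filter]
  refine Finset.sum_congr rfl fun s _ => ?_
  by_cases h : L s = A <;> simp [Set.indicator_apply, h]

theorem dAP_le_dd (L : S → Finset AP) (μ ν : ProbDist S) :
    dAP L μ ν ≤ (1 / 2) * dd μ ν := by
  unfold dAP dd
  have h : ∑ A : Finset AP, |pOf L μ A - pOf L ν A| ≤ ∑ s, |μ.f s - ν.f s| := by
    rw [← Finset.sum_fiberwise Finset.univ (fun s => L s) (fun s => |μ.f s - ν.f s|)]
    refine Finset.sum_le_sum fun A _ => ?_
    rw [pOf_eq, pOf_eq, ← Finset.sum_sub_distrib]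
    exact Finset.abs_sum_le_sum_abs _ _
  linarith

theorem dAP_triangle (L : S → Finset AP) (μ ρ ν : ProbDist S) :
    dAP L μ ν ≤ dAP L μ ρ + dAP L ρ ν := by
  unfold dAP
  have h : ∑ A : Finset AP, |pOf L μ A - pOf L ν A| ≤
      ∑ A : Finset AP, |pOf L μ A - pOf L ρ A| + ∑ A : Finset AP, |pOf L ρ A - pOf L ν A| := by
    rw [← Finset.sum_add_distrib]
    exact Finset.sum_le_sum fun A _ => abs_sub_le _ _ _
  linarith

/-- A single transition gives a combined transition. -/
theorem combined_single {M : PA S Act AP} {s : S} {a : Act} {ρ : ProbDist S}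
    (h : M.trans s a ρ) : Combined M s a ρ := by
  refine ⟨1, fun _ => 1, fun _ => ρ, fun _ => zero_le_one, by simp, fun _ => h, fun t => by simp⟩

/-- Mixture of distributions. -/
noncomputable def mix (ν : ProbDist S) (k : S → ProbDist S) : ProbDist S where
  f := fun t => ∑ s, ν.f s * (k s).f t
  nonneg := fun t => Finset.sum_nonneg fun s _ => mul_nonneg (ν.nonneg s) ((k s).nonneg t)
  sum_one := by
    rw [Finset.sum_comm]
    calc ∑ s, ∑ t, ν.f s * (k s).f t = ∑ s, ν.f s * ∑ t, (k s).f t := by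
          exact Finset.sum_congr rfl fun s _ => (Finset.mul_sum _ _ _).symm
      _ = 1 := by simp [ProbDist.sum_one]

theorem lifted_mix {M : PA S Act AP} {a : Act} {ν : ProbDist S} {k : S → ProbDist S}
    (hk : ∀ s, Combined M s a (k s)) : Lifted M ν a (mix ν k) :=
  ⟨k, fun s _ => hk s, fun _ => rfl⟩

end StmtAux

namespace StmtAux2
open StmtAux

set_option linter.unusedSectionVars false

variable {S Act AP : Type} [Fintype S] [Fintype AP] [DecidableEq AP]
variable {M : PA S Act AP} {γ : ℝ}

/-- Mimicking: under input-enabledness, any two distributions are ε-bisimilar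
    for ε at least half their L1 distance. -/
theorem approx_of_dd (hM : M.InputEnabled) (hγ0 : 0 < γ) (hγ1 : γ ≤ 1)
    {ε : ℝ} {μ ν : ProbDist S} (h : (1 / 2) * dd μ ν ≤ ε) :
    ApproxBisimilar M γ ε μ ν := by
  classical
  refine ⟨fun ε μ ν => (1 / 2) * dd μ ν ≤ ε, ⟨fun ε x y hxy => show (1:ℝ)/2 * dd y x ≤ ε by rw [dd_comm]; exact hxy, ?_⟩, h⟩
  intro ε μ ν hεμν
  replace hεμν : (1:ℝ)/2 * dd μ ν ≤ ε := hεμν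
  have hε0 : 0 ≤ ε := le_trans (mul_nonneg (by norm_num) (dd_nonneg _ _)) hεμν
  refine ⟨le_trans (dAP_le_dd M.L μ ν) hεμν, ?_⟩
  rintro a μ' ⟨k, hk, hf⟩
  set k' : S → ProbDist S := fun s =>
    if h : 0 < μ.f s then k s else Classical.choose (hM s a) with hk'def
  have hk' : ∀ s, Combined M s a (k' s) := by
    intro s
    by_cases h : 0 < μ.f s
    · simpa [hk'def, h] using hk s h
    · simpa [hk'def, h] using combined_single (Classical.choose_spec (hM s a))
  refine ⟨mix ν k', lifted_mix hk', ?_⟩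
  have hμ' : ∀ t, μ'.f t = ∑ s, μ.f s * (k' s).f t := by
    intro t
    rw [hf t]
    refine Finset.sum_congr rfl fun s _ => ?_
    by_cases h : 0 < μ.f s
    · simp [hk'def, h]
    · have : μ.f s = 0 := le_antisymm (not_lt.mp h) (μ.nonneg s)
      simp [this]
  have key : dd μ' (mix ν k') ≤ dd μ ν := by
    unfold dd
    have h1 : ∀ t, |μ'.f t - (mix ν k').f t| ≤ ∑ s, |μ.f s - ν.f s| * (k' s).f t := by
      intro t
      rw [hμ' t]
      show |∑ s, μ.f s * (k' s).f t - ∑ s, ν.f s * (k' s).f t| ≤ _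
      rw [← Finset.sum_sub_distrib]
      refine le_trans (Finset.abs_sum_le_sum_abs _ _) (Finset.sum_le_sum fun s _ => ?_)
      rw [← sub_mul, abs_mul, abs_of_nonneg ((k' s).nonneg t)]
    calc ∑ t, |μ'.f t - (mix ν k').f t| ≤ ∑ t, ∑ s, |μ.f s - ν.f s| * (k' s).f t :=
          Finset.sum_le_sum fun t _ => h1 t
      _ = ∑ s, |μ.f s - ν.f s| * ∑ t, (k' s).f t := by
          rw [Finset.sum_comm]
          exact Finset.sum_congr rfl fun s _ => (Finset.mul_sum _ _ _).symm
      _ = ∑ s, |μ.f s - ν.f s| := by simp [ProbDist.sum_one]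
  have hεγ : ε ≤ ε / γ := by
    rw [le_div_iff₀ hγ0]
    nlinarith
  linarith

/-- Monotonicity of approximate bisimilarity in ε (needs γ ≤ 1 not at all, γ > 0 yes). -/
theorem approx_mono (hγ0 : 0 < γ) {ε ε' : ℝ} {μ ν : ProbDist S}
    (h : ApproxBisimilar M γ ε μ ν) (hle : ε ≤ ε') : ApproxBisimilar M γ ε' μ ν := by
  obtain ⟨R, hR, hμν⟩ := h
  refine ⟨fun δ x y => ∃ e, e ≤ δ ∧ R e x y, ⟨?_, ?_⟩, ε, hle, hμν⟩
  · rintro δ x y ⟨e, he, hxy⟩; exact ⟨e, he, hR.1 e hxy⟩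
  · rintro δ x y ⟨e, he, hxy⟩
    obtain ⟨hd, hstep⟩ := hR.2 e x y hxy
    refine ⟨le_trans hd he, ?_⟩
    intro a x' hx'
    obtain ⟨y', hy', hR'⟩ := hstep a x' hx'
    exact ⟨y', hy', e / γ, by gcongr, hR'⟩

theorem approx_symm {ε : ℝ} {μ ν : ProbDist S}
    (h : ApproxBisimilar M γ ε μ ν) : ApproxBisimilar M γ ε ν μ := by
  obtain ⟨R, hR, hμν⟩ := h
  exact ⟨R, hR, hR.1 ε hμν⟩

theorem approx_dAP {ε : ℝ} {μ ν : ProbDist S}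
    (h : ApproxBisimilar M γ ε μ ν) : dAP M.L μ ν ≤ ε := by
  obtain ⟨R, hR, hμν⟩ := h
  exact (hR.2 ε μ ν hμν).1

theorem approx_step {ε : ℝ} {μ ν μ' : ProbDist S} {a : Act}
    (h : ApproxBisimilar M γ ε μ ν) (hμ' : Lifted M μ a μ') :
    ∃ ν', Lifted M ν a ν' ∧ ApproxBisimilar M γ (ε / γ) μ' ν' := by
  obtain ⟨R, hR, hμν⟩ := h
  obtain ⟨ν', hν', hR'⟩ := (hR.2 ε μ ν hμν).2 a μ' hμ'
  exact ⟨ν', hν', R, hR, hR'⟩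

/-- Triangle inequality for approximate bisimilarity. -/
theorem approx_triangle (hγ0 : 0 < γ) {δ η : ℝ} {μ ρ ν : ProbDist S}
    (h1 : ApproxBisimilar M γ δ μ ρ) (h2 : ApproxBisimilar M γ η ρ ν) :
    ApproxBisimilar M γ (δ + η) μ ν := by
  obtain ⟨R₁, hR₁, hμρ⟩ := h1
  obtain ⟨R₂, hR₂, hρν⟩ := h2
  refine ⟨fun ε x y => ∃ d e z, d + e ≤ ε ∧ ((R₁ d x z ∧ R₂ e z y) ∨ (R₂ d x z ∧ R₁ e z y)),
    ⟨?_, ?_⟩, δ, η, ρ, le_refl _, Or.inl ⟨hμρ, hρν⟩⟩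
  · rintro ε x y ⟨d, e, z, hde, hcase⟩
    rcases hcase with ⟨hxz, hzy⟩ | ⟨hxz, hzy⟩
    · exact ⟨e, d, z, by linarith, Or.inr ⟨hR₂.1 e hzy, hR₁.1 d hxz⟩⟩
    · exact ⟨e, d, z, by linarith, Or.inl ⟨hR₁.1 e hzy, hR₂.1 d hxz⟩⟩
  · rintro ε x y ⟨d, e, z, hde, hcase⟩
    rcases hcase with ⟨hxz, hzy⟩ | ⟨hxz, hzy⟩
    · have hd1 := (hR₁.2 d x z hxz).1
      have hd2 := (hR₂.2 e z y hzy).1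
      refine ⟨le_trans (dAP_triangle M.L x z y) (by linarith), ?_⟩
      intro a x' hx'
      obtain ⟨z', hz', hRz'⟩ := (hR₁.2 d x z hxz).2 a x' hx'
      obtain ⟨y', hy', hRy'⟩ := (hR₂.2 e z y hzy).2 a z' hz'
      refine ⟨y', hy', d / γ, e / γ, z', ?_, Or.inl ⟨hRz', hRy'⟩⟩
      rw [← add_div]; gcongr
    · have hd1 := (hR₂.2 d x z hxz).1
      have hd2 := (hR₁.2 e z y hzy).1
      refine ⟨le_trans (dAP_triangle M.L x z y) (by linarith), ?_⟩
      intro a x' hx'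
      obtain ⟨z', hz', hRz'⟩ := (hR₂.2 d x z hxz).2 a x' hx'
      obtain ⟨y', hy', hRy'⟩ := (hR₁.2 e z y hzy).2 a z' hz'
      refine ⟨y', hy', d / γ, e / γ, z', ?_, Or.inr ⟨hRz', hRy'⟩⟩
      rw [← add_div]; gcongr

end StmtAux2

namespace StmtAux3
open StmtAux StmtAux2

set_option linter.unusedSectionVars false

variable {S Act AP : Type} [Fintype S] [Fintype AP] [DecidableEq AP]
variable {M : PA S Act AP}

/-- The coordinate embedding of ProbDist into ℝ^S. -/
def e : ProbDist S → (S → ℝ) := fun μ => μ.f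

theorem emb : Topology.IsEmbedding (e (S := S)) :=
  ⟨⟨rfl⟩, fun _ _ h => pd_ext h⟩

theorem cont_e : Continuous (e (S := S)) := continuous_induced_dom

/-- The transition targets as a Finset. -/
noncomputable def Tfin (M : PA S Act AP) (s : S) (a : Act) : Finset (ProbDist S) :=
  (M.imageFinite s a).toFinset

noncomputable def gEnum (M : PA S Act AP) (s : S) (a : Act) :
    Fin (Tfin M s a).card → ProbDist S :=
  fun i => ((Tfin M s a).equivFin.symm i : ProbDist S)

/-- Image of the combined-transition set under e, as an image of the standard simplex. -/
theorem combined_image_eq (hM : M.InputEnabled) (s : S) (a : Act) :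
    e '' {ρ | Combined M s a ρ} =
      (fun p => fun t => ∑ i, p i * (gEnum M s a i).f t) ''
        stdSimplex ℝ (Fin (Tfin M s a).card) := by
  classical
  set Tf := Tfin M s a with hTf
  set g := gEnum M s a with hgdef
  have hg : ∀ i, M.trans s a (g i) := by
    intro i
    have h1 : g i ∈ Tf := (Tf.equivFin.symm i).2
    rw [hTf] at h1
    exact (Set.Finite.mem_toFinset _).mp h1
  ext x
  constructor
  · rintro ⟨ρ, ⟨m, q, w, hq, hq1, hw, hf⟩, rfl⟩
    have hwmem : ∀ j, w j ∈ Tf := fun j => by rw [hTf]; exact (Set.Finite.mem_toFinset _).mpr (hw j)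
    set idx : Fin m → Fin Tf.card := fun j => Tf.equivFin ⟨w j, hwmem j⟩ with hidx
    have hgidx : ∀ j, g (idx j) = w j := by
      intro j; show ((Tf.equivFin.symm (Tf.equivFin ⟨w j, hwmem j⟩)) : ProbDist S) = w j; rw [Equiv.symm_apply_apply]
    refine ⟨fun i => ∑ j ∈ Finset.univ.filter (fun j => idx j = i), q j, ⟨?_, ?_⟩, ?_⟩
    · intro i; exact Finset.sum_nonneg fun j _ => hq j
    · rw [Finset.sum_fiberwise]; exact hq1
    · funext t
      show ∑ i, (∑ j ∈ Finset.univ.filter (fun j => idx j = i), q j) * (g i).f t = _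
      have : ∀ i, (∑ j ∈ Finset.univ.filter (fun j => idx j = i), q j) * (g i).f t
          = ∑ j ∈ Finset.univ.filter (fun j => idx j = i), q j * (w j).f t := by
        intro i
        rw [Finset.sum_mul]
        refine Finset.sum_congr rfl fun j hj => ?_
        rw [Finset.mem_filter] at hj
        rw [← hj.2, hgidx j]
      rw [Finset.sum_congr rfl fun i _ => this i, Finset.sum_fiberwise]
      exact (hf t).symm
  · rintro ⟨p, ⟨hp0, hp1⟩, rfl⟩
    refine ⟨⟨fun t => ∑ i, p i * (g i).f t, ?_, ?_⟩, ⟨Tf.card, p, g, hp0, hp1, hg, fun t => rfl⟩, rfl⟩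
    · intro t; exact Finset.sum_nonneg fun i _ => mul_nonneg (hp0 i) ((g i).nonneg t)
    · rw [Finset.sum_comm]
      calc ∑ i, ∑ t, p i * (g i).f t = ∑ i, p i * ∑ t, (g i).f t :=
            Finset.sum_congr rfl fun i _ => (Finset.mul_sum _ _ _).symm
        _ = 1 := by simp [ProbDist.sum_one, hp1]

theorem combined_image_compact (hM : M.InputEnabled) (s : S) (a : Act) :
    IsCompact (e '' {ρ | Combined M s a ρ}) := by
  rw [combined_image_eq hM s a]
  refine (isCompact_stdSimplex _ _).image ?_
  refine continuous_pi fun t => ?_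
  exact continuous_finset_sum _ fun i _ => (continuous_apply i).mul continuous_const

/-- The set of lifted successors is compact. -/
theorem succ_compact (hM : M.InputEnabled) (ν : ProbDist S) (a : Act) :
    IsCompact {ν' | Lifted M ν a ν'} := by
  classical
  rw [emb.isCompact_iff]
  have himage : e '' {ν' | Lifted M ν a ν'} =
      (fun g : S → S → ℝ => fun t => ∑ s, ν.f s * g s t) ''
        (Set.univ.pi fun s => e '' {ρ | Combined M s a ρ}) := by
    ext x
    constructor
    · rintro ⟨ν', ⟨k, hk, hf⟩, rfl⟩
      set k' : S → ProbDist S := fun s =>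
        if h : 0 < ν.f s then k s else Classical.choose (hM s a) with hk'def
      have hk' : ∀ s, Combined M s a (k' s) := by
        intro s
        by_cases h : 0 < ν.f s
        · simpa [hk'def, h] using hk s h
        · simpa [hk'def, h] using combined_single (Classical.choose_spec (hM s a))
      refine ⟨fun s => e (k' s), fun s _ => ⟨k' s, hk' s, rfl⟩, ?_⟩
      funext t
      show ∑ s, ν.f s * (k' s).f t = ν'.f t
      rw [hf t]
      refine Finset.sum_congr rfl fun s _ => ?_
      by_cases h : 0 < ν.f s
      · simp [hk'def, h]
      · have : ν.f s = 0 := le_antisymm (not_lt.mp h) (ν.nonneg s)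
        simp [this]
    · rintro ⟨g, hg, rfl⟩
      have : ∀ s, ∃ ρ, Combined M s a ρ ∧ e ρ = g s := by
        intro s
        obtain ⟨ρ, hρ, hρ'⟩ := hg s (Set.mem_univ s)
        exact ⟨ρ, hρ, hρ'⟩
      choose k hk hke using this
      refine ⟨mix ν k, lifted_mix hk, ?_⟩
      funext t
      show (mix ν k).f t = ∑ s, ν.f s * g s t
      exact Finset.sum_congr rfl fun s _ => by rw [← hke s]; rfl
  rw [himage]
  refine (isCompact_univ_pi fun s => combined_image_compact hM s a).image ?_
  refine continuous_pi fun t => ?_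
  exact continuous_finset_sum _ fun s _ =>
    continuous_const.mul ((continuous_apply t).comp (continuous_apply s))

theorem succ_closed (hM : M.InputEnabled) (ν : ProbDist S) (a : Act) :
    IsClosed {ν' | Lifted M ν a ν'} := by
  haveI : T2Space (ProbDist S) := emb.t2Space
  exact (succ_compact hM ν a).isClosed

end StmtAux3

namespace StmtAux4
open StmtAux StmtAux2 StmtAux3

set_option linter.unusedSectionVars false

variable {S Act AP : Type} [Fintype S] [Fintype AP] [DecidableEq AP]
variable {M : PA S Act AP} {γ : ℝ}

theorem bisim_symm {μ ν : ProbDist S} (h : Bisimilar M μ ν) : Bisimilar M ν μ := by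
  obtain ⟨R, hR, hμν⟩ := h
  exact ⟨R, hR, hR.1 hμν⟩

theorem bisim_approx (hγ0 : 0 < γ) {μ ν : ProbDist S} (h : Bisimilar M μ ν)
    {ε : ℝ} (hε : 0 ≤ ε) : ApproxBisimilar M γ ε μ ν := by
  refine ⟨fun ε x y => 0 ≤ ε ∧ Bisimilar M x y, ⟨?_, ?_⟩, hε, h⟩
  · rintro ε x y ⟨hε, hxy⟩; exact ⟨hε, bisim_symm hxy⟩
  · rintro ε x y ⟨hε, R, hR, hxy⟩
    obtain ⟨hprob, hstep⟩ := hR.2 x y hxy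
    constructor
    · have : dAP M.L x y = 0 := by
        unfold dAP
        have : ∀ A : Finset AP, |pOf M.L x A - pOf M.L y A| = 0 := by
          intro A
          have := hprob A
          unfold PA.probOf at this
          rw [this]; simp
        simp [this]
      linarith
    · intro a x' hx'
      obtain ⟨y', hy', hRxy'⟩ := hstep a x' hx'
      exact ⟨y', hy', div_nonneg hε hγ0.le, R, hR, hRxy'⟩

theorem db_set_nonempty (hM : M.InputEnabled) (hγ0 : 0 < γ) (hγ1 : γ ≤ 1) (μ ν : ProbDist S) :
    ((1:ℝ)/2 * dd μ ν) ∈ {ε | 0 ≤ ε ∧ ApproxBisimilar M γ ε μ ν} :=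
  ⟨mul_nonneg (by norm_num) (dd_nonneg μ ν), approx_of_dd hM hγ0 hγ1 (le_refl _)⟩

theorem approx_of_db_zero (hM : M.InputEnabled) (hγ0 : 0 < γ) (hγ1 : γ ≤ 1)
    {μ ν : ProbDist S} (hDb : Db M γ μ ν = 0) {ε : ℝ} (hε : 0 < ε) :
    ApproxBisimilar M γ ε μ ν := by
  set SS := {ε | 0 ≤ ε ∧ ApproxBisimilar M γ ε μ ν} with hSS
  have hne : SS.Nonempty := ⟨_, db_set_nonempty hM hγ0 hγ1 μ ν⟩
  have hex : ∃ x ∈ SS, x < ε := by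
    by_contra hcon
    push_neg at hcon
    have : ε ≤ sInf SS := le_csInf hne hcon
    rw [show sInf SS = Db M γ μ ν from rfl, hDb] at this
    linarith
  obtain ⟨x, hx, hxε⟩ := hex
  exact approx_mono hγ0 hx.2 hxε.le

/-- The candidate bisimulation. -/
def B (M : PA S Act AP) (γ : ℝ) (μ ν : ProbDist S) : Prop :=
  ∀ ε : ℝ, 0 < ε → ApproxBisimilar M γ ε μ ν

theorem isBisim_B (hM : M.InputEnabled) (hγ0 : 0 < γ) (hγ1 : γ ≤ 1) :
    IsBisim M (B M γ) := by
  constructor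
  · intro x y h ε hε
    exact approx_symm (h ε hε)
  · intro μ ν h
    constructor
    · -- equal probabilities on labels
      intro A
      have key : ∀ ε : ℝ, 0 < ε → |pOf M.L μ A - pOf M.L ν A| ≤ ε := by
        intro ε hε
        have hd : dAP M.L μ ν ≤ ε / 2 := approx_dAP (h (ε/2) (by linarith))
        have hsingle : |pOf M.L μ A - pOf M.L ν A| ≤
            ∑ A' : Finset AP, |pOf M.L μ A' - pOf M.L ν A'| :=
          Finset.single_le_sum (f := fun A' => |pOf M.L μ A' - pOf M.L ν A'|)
            (fun A' _ => abs_nonneg _) (Finset.mem_univ A)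
        unfold dAP at hd
        linarith
      have h0 : |pOf M.L μ A - pOf M.L ν A| ≤ 0 :=
        le_of_forall_pos_le_add (fun ε hε => by simpa using key ε hε)
      have := abs_nonneg (pOf M.L μ A - pOf M.L ν A)
      have : pOf M.L μ A - pOf M.L ν A = 0 := abs_eq_zero.mp (le_antisymm h0 this)
      show pOf M.L μ A = pOf M.L ν A
      linarith
    · -- transfer
      intro a μ' hμ'
      haveI : T2Space (ProbDist S) := emb.t2Space
      set Succ := {ν' | Lifted M ν a ν'} with hSucc
      set G : {δ : ℝ // 0 < δ} → Set (ProbDist S) :=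
        fun δ => {ρ | Lifted M ν a ρ ∧ ApproxBisimilar M γ δ.1 μ' ρ} with hG
      set F : {δ : ℝ // 0 < δ} → Set (ProbDist S) :=
        fun δ => Succ ∩ closure (G δ) with hF
      have hGne : ∀ δ, (G δ).Nonempty := by
        rintro ⟨δ, hδ⟩
        have hbig : ApproxBisimilar M γ (δ * γ) μ ν := h (δ * γ) (by positivity)
        obtain ⟨ν', hν', happ⟩ := approx_step hbig hμ'
        rw [mul_div_cancel_right₀ _ hγ0.ne'] at happ
        exact ⟨ν', hν', happ⟩
      have hGmono : ∀ δ₁ δ₂ : {δ : ℝ // 0 < δ}, δ₁.1 ≤ δ₂.1 → G δ₁ ⊆ G δ₂ := by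
        rintro δ₁ δ₂ hle ρ ⟨hl, ha⟩
        exact ⟨hl, approx_mono hγ0 ha hle⟩
      have hdir : Directed (fun x1 x2 => x1 ⊇ x2) F := by
        intro δ₁ δ₂
        refine ⟨⟨min δ₁.1 δ₂.1, lt_min δ₁.2 δ₂.2⟩, ?_, ?_⟩
        · exact Set.inter_subset_inter (le_refl _) (closure_mono (hGmono _ _ (min_le_left _ _)))
        · exact Set.inter_subset_inter (le_refl _) (closure_mono (hGmono _ _ (min_le_right _ _)))
      have hFne : ∀ δ, (F δ).Nonempty := by
        intro δ
        obtain ⟨ρ, hρ⟩ := hGne δ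
        exact ⟨ρ, hρ.1, subset_closure hρ⟩
      have hFc : ∀ δ, IsCompact (F δ) :=
        fun δ => (succ_compact hM ν a).inter_right isClosed_closure
      have hFcl : ∀ δ, IsClosed (F δ) :=
        fun δ => (succ_closed hM ν a).inter isClosed_closure
      haveI : Nonempty {δ : ℝ // 0 < δ} := ⟨⟨1, one_pos⟩⟩
      obtain ⟨ν', hν'⟩ :=
        IsCompact.nonempty_iInter_of_directed_nonempty_isCompact_isClosed F hdir hFne hFc hFcl
      simp only [Set.mem_iInter] at hν'
      have hν'Succ : Lifted M ν a ν' := (hν' ⟨1, one_pos⟩).1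
      refine ⟨ν', hν'Succ, ?_⟩
      intro δ hδ
      -- ν' is in the closure of G (δ/2); pick a nearby element
      have hcl : ν' ∈ closure (G ⟨δ/2, by linarith⟩) := (hν' ⟨δ/2, by linarith⟩).2
      set n : ℝ := (Fintype.card S : ℝ) with hn
      have hn0 : 0 ≤ n := by positivity
      set r : ℝ := δ / (2 * (n + 1)) with hr
      have hr0 : 0 < r := by positivity
      have hmem : (G ⟨δ/2, by linarith⟩ ∩ e ⁻¹' Metric.ball (e ν') r).Nonempty := by
        have := mem_closure_iff.mp hcl (e ⁻¹' Metric.ball (e ν') r)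
          (cont_e.isOpen_preimage _ Metric.isOpen_ball)
          (by simp [Metric.mem_ball, dist_self, hr0])
        obtain ⟨ρ, hρo, hρG⟩ := this
        exact ⟨ρ, hρG, hρo⟩
      obtain ⟨ρ, ⟨hρl, hρa⟩, hρball⟩ := hmem
      -- half L1 distance from ρ to ν' is at most δ/2
      have hdd : (1:ℝ)/2 * dd ρ ν' ≤ δ/2 := by
        have hcoord : ∀ s, |ρ.f s - ν'.f s| ≤ r := by
          intro s
          have h1 : dist (e ρ s) (e ν' s) ≤ dist (e ρ) (e ν') := dist_le_pi_dist _ _ s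
          have h2 : dist (e ρ) (e ν') < r := by simpa [Metric.mem_ball] using hρball
          have : dist (ρ.f s) (ν'.f s) ≤ r := le_trans h1 h2.le
          rwa [Real.dist_eq] at this
        have hsum : dd ρ ν' ≤ n * r := by
          unfold dd
          calc ∑ s, |ρ.f s - ν'.f s| ≤ ∑ _s : S, r := Finset.sum_le_sum fun s _ => hcoord s
            _ = n * r := by rw [Finset.sum_const, hn]; simp [mul_comm]
        have : n * r ≤ δ := by
          have h2 : (0:ℝ) < 2 * (n + 1) := by positivity
          rw [hr, mul_div_assoc', div_le_iff₀ h2]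
          nlinarith
        linarith
      have h1 : ApproxBisimilar M γ (δ/2) μ' ρ := hρa
      have h2 : ApproxBisimilar M γ (δ/2) ρ ν' := approx_of_dd hM hγ0 hγ1 hdd
      have := approx_triangle hγ0 h1 h2
      rwa [add_halves] at this

end StmtAux4

theorem stmt12 {S Act AP : Type} [Fintype S] [Fintype AP] [DecidableEq AP]
    (M : PA S Act AP) (hM : M.InputEnabled) (γ : ℝ) (hγ0 : 0 < γ) (hγ1 : γ ≤ 1)
    (μ ν : ProbDist S) :
    Bisimilar M μ ν ↔ Db M γ μ ν = 0 := by
  constructor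
  · intro h
    have mem0 : (0:ℝ) ∈ {ε | 0 ≤ ε ∧ ApproxBisimilar M γ ε μ ν} :=
      ⟨le_refl 0, StmtAux4.bisim_approx hγ0 h (le_refl 0)⟩
    have hbdd : BddBelow {ε | 0 ≤ ε ∧ ApproxBisimilar M γ ε μ ν} :=
      ⟨0, fun x hx => hx.1⟩
    exact le_antisymm (csInf_le hbdd mem0) (le_csInf ⟨0, mem0⟩ fun x hx => hx.1)
  · intro hDb
    exact ⟨StmtAux4.B M γ, StmtAux4.isBisim_B hM hγ0 hγ1,
      fun ε hε => StmtAux4.approx_of_db_zero hM hγ0 hγ1 hDb hε⟩
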